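/- arXiv:2210.12159 — 5 statements merged into one kernel-verified Lean document; each statement's English description precedes it below -/
import Mathlib

section
/- For every non-negative integer n and every integer s, 2 * ∑_{k=0}^{⌊n/2⌋} C(n, 2k) * L(2k+s) = L(2n+s) + (-1)^s * L(n-s), where L denotes the Lucas sequence extended to all integers. -/
open Finset

private lemma pascal_sum (f : ℕ → ℤ) (n : ℕ) :
    ∑ k ∈ range (n + 2), ((n + 1).choose k : ℤ) * f k
      = ∑ k ∈ range (n + 1), (n.choose k : ℤ) * (f k + f (k + 1)) := by
  have h1 : ∑ k ∈ range (n + 2), ((n + 1).choose k : ℤ) * f k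
      = (∑ k ∈ range (n + 1), ((n + 1).choose (k + 1) : ℤ) * f (k + 1)) + f 0 := by
    rw [Finset.sum_range_succ' (fun k => ((n + 1).choose k : ℤ) * f k)]
    simp
  have h3 : ∑ k ∈ range (n + 1), ((n.choose (k + 1)) : ℤ) * f (k + 1)
      = (∑ k ∈ range (n + 1), (n.choose k : ℤ) * f k) - f 0 := by
    have h := Finset.sum_range_succ' (fun k => ((n.choose k : ℤ)) * f k) (n + 1)
    have h4 : ∑ k ∈ range (n + 2), (n.choose k : ℤ) * f k
        = ∑ k ∈ range (n + 1), (n.choose k : ℤ) * f k := by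
      rw [Finset.sum_range_succ]
      simp [Nat.choose_eq_zero_of_lt (Nat.lt_succ_self n)]
    rw [h4] at h
    simp at h
    linarith
  rw [h1]
  have hps : ∀ k, ((n + 1).choose (k + 1) : ℤ) = (n.choose k : ℤ) + (n.choose (k + 1) : ℤ) := by
    intro k
    rw [Nat.choose_succ_succ]
    push_cast; ring
  calc (∑ k ∈ range (n + 1), ((n + 1).choose (k + 1) : ℤ) * f (k + 1)) + f 0
      = (∑ k ∈ range (n + 1), ((n.choose k : ℤ) * f (k + 1)
          + (n.choose (k + 1) : ℤ) * f (k + 1))) + f 0 := by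
        congr 1; apply Finset.sum_congr rfl; intro k _; rw [hps k]; ring
    _ = (∑ k ∈ range (n + 1), (n.choose k : ℤ) * f (k + 1))
          + ((∑ k ∈ range (n + 1), (n.choose k : ℤ) * f k) - f 0) + f 0 := by
        rw [Finset.sum_add_distrib, h3]
    _ = (∑ k ∈ range (n + 1), (n.choose k : ℤ) * f (k + 1))
          + (∑ k ∈ range (n + 1), (n.choose k : ℤ) * f k) := by ring
    _ = ∑ k ∈ range (n + 1), (n.choose k : ℤ) * (f k + f (k + 1)) := by
        rw [← Finset.sum_add_distrib]
        apply Finset.sum_congr rfl; intro k _; ring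

private lemma even_sum (f : ℕ → ℤ) (m : ℕ) :
    ∑ k ∈ range (2 * m), (1 + (-1 : ℤ) ^ k) * f k = 2 * ∑ j ∈ range m, f (2 * j) := by
  induction m with
  | zero => simp
  | succ m ih =>
    have h : 2 * (m + 1) = (2 * m + 1) + 1 := by ring
    rw [h, Finset.sum_range_succ, Finset.sum_range_succ, ih, Finset.sum_range_succ]
    have he : (-1 : ℤ) ^ (2 * m) = 1 := by
      rw [pow_mul]; norm_num
    have ho : (-1 : ℤ) ^ (2 * m + 1) = -1 := by
      rw [pow_succ, he]; norm_num
    rw [he, ho]; ring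

private lemma Lrec (L : ℤ → ℤ) (hL : ∀ j : ℤ, L j = L (j - 1) + L (j - 2)) (j : ℤ) :
    L (j + 2) = L (j + 1) + L j := by
  have h := hL (j + 2)
  rw [show j + 2 - 1 = j + 1 by ring, show j + 2 - 2 = j by ring] at h
  exact h

private lemma Lneg (L : ℤ → ℤ) (hL0 : L 0 = 2) (hL1 : L 1 = 1)
    (hL : ∀ j : ℤ, L j = L (j - 1) + L (j - 2)) (m : ℕ) :
    L (-(m : ℤ)) = (-1 : ℤ) ^ m * L m := by
  induction m using Nat.twoStepInduction with
  | zero => simp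
  | one =>
    have h := hL 1
    simp only [show (1 : ℤ) - 1 = 0 by ring, show (1 : ℤ) - 2 = -1 by ring] at h
    push_cast
    rw [hL0] at h
    rw [hL1] at h ⊢
    linarith
  | more m ih1 ih2 =>
    have hr := hL (-(m : ℤ))
    have e1 : -(m : ℤ) - 1 = -((m : ℤ) + 1) := by ring
    have e2 : -(m : ℤ) - 2 = -((m : ℤ) + 2) := by ring
    rw [e1, e2] at hr
    have hr2 := Lrec L hL (m : ℤ)
    push_cast at ih1 ih2 ⊢
    have hp : (-1 : ℤ) ^ (m + 2) = (-1) ^ m := by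
      rw [pow_succ, pow_succ]; ring
    rw [hp]
    have hx : L (-((m : ℤ) + 2)) = L (-(m : ℤ)) - L (-((m : ℤ) + 1)) := by linarith
    rw [hx, ih1, ih2, hr2, pow_succ]
    ring

private lemma S1 (L : ℤ → ℤ) (hL : ∀ j : ℤ, L j = L (j - 1) + L (j - 2)) (n : ℕ) : ∀ s : ℤ,
    ∑ k ∈ range (n + 1), (n.choose k : ℤ) * L ((k : ℤ) + s) = L (2 * n + s) := by
  induction n with
  | zero => intro s; simp
  | succ n ih =>
    intro s
    rw [pascal_sum (fun k => L ((k : ℤ) + s)) n]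
    have hstep : ∑ k ∈ range (n + 1), (n.choose k : ℤ)
          * (L ((k : ℤ) + s) + L (((k + 1 : ℕ) : ℤ) + s))
        = ∑ k ∈ range (n + 1), (n.choose k : ℤ) * L ((k : ℤ) + (s + 2)) := by
      apply Finset.sum_congr rfl; intro k _
      have hr := Lrec L hL ((k : ℤ) + s)
      have e1 : (k : ℤ) + (s + 2) = (k : ℤ) + s + 2 := by ring
      have e2 : ((k + 1 : ℕ) : ℤ) + s = (k : ℤ) + s + 1 := by push_cast; ring
      rw [e1, e2, hr]
      ring
    rw [hstep, ih (s + 2)]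
    congr 1
    push_cast; ring

private lemma S2 (L : ℤ → ℤ) (hL : ∀ j : ℤ, L j = L (j - 1) + L (j - 2)) (n : ℕ) : ∀ s : ℤ,
    ∑ k ∈ range (n + 1), (n.choose k : ℤ) * ((-1 : ℤ) ^ k * L ((k : ℤ) + s))
      = (-1 : ℤ) ^ n * L (s - n) := by
  induction n with
  | zero => intro s; simp
  | succ n ih =>
    intro s
    rw [pascal_sum (fun k => (-1 : ℤ) ^ k * L ((k : ℤ) + s)) n]
    have hstep : ∑ k ∈ range (n + 1), (n.choose k : ℤ) *
          ((-1 : ℤ) ^ k * L ((k : ℤ) + s) + (-1 : ℤ) ^ (k + 1) * L (((k + 1 : ℕ) : ℤ) + s))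
        = -∑ k ∈ range (n + 1), (n.choose k : ℤ) * ((-1 : ℤ) ^ k * L ((k : ℤ) + (s - 1))) := by
      rw [← Finset.sum_neg_distrib]
      apply Finset.sum_congr rfl; intro k _
      have hr := Lrec L hL ((k : ℤ) + s - 1)
      have e1 : (k : ℤ) + s - 1 + 2 = ((k + 1 : ℕ) : ℤ) + s := by push_cast; ring
      have e2 : (k : ℤ) + s - 1 + 1 = (k : ℤ) + s := by ring
      have e3 : (k : ℤ) + s - 1 = (k : ℤ) + (s - 1) := by ring
      rw [e1, e2, e3] at hr
      rw [hr, pow_succ]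
      ring
    rw [hstep, ih (s - 1), pow_succ]
    have e4 : s - 1 - (n : ℤ) = s - ((n + 1 : ℕ) : ℤ) := by push_cast; ring
    rw [e4]
    ring

theorem stmt1 (L : ℤ → ℤ) (hL0 : L 0 = 2) (hL1 : L 1 = 1)
    (hL : ∀ j : ℤ, L j = L (j - 1) + L (j - 2)) (n : ℕ) (s : ℤ) :
    2 * ∑ k ∈ Finset.range (n / 2 + 1), (n.choose (2 * k) : ℤ) * L (2 * (k : ℤ) + s)
      = L (2 * (n : ℤ) + s) + (-1 : ℤ) ^ s.natAbs * L ((n : ℤ) - s) := by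
  have hext : ∑ k ∈ Finset.range (n / 2 + 1), (n.choose (2 * k) : ℤ) * L (2 * (k : ℤ) + s)
      = ∑ k ∈ Finset.range (n + 1), (n.choose (2 * k) : ℤ) * L (2 * (k : ℤ) + s) := by
    apply Finset.sum_subset
    · intro x hx; simp at hx ⊢; omega
    · intro x _ hx
      simp only [Finset.mem_range, not_lt] at hx
      rw [Nat.choose_eq_zero_of_lt (by omega)]
      simp
  rw [hext]
  have hev := even_sum (fun k => (n.choose k : ℤ) * L ((k : ℤ) + s)) (n + 1)
  have hev2 : ∑ k ∈ range (2 * (n + 1)), (1 + (-1 : ℤ) ^ k) * ((n.choose k : ℤ) * L ((k : ℤ) + s))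
      = 2 * ∑ j ∈ range (n + 1), (n.choose (2 * j) : ℤ) * L (2 * (j : ℤ) + s) := by
    rw [hev]
    congr 1
  rw [← hev2]
  have hsplit : ∑ k ∈ range (2 * (n + 1)), (1 + (-1 : ℤ) ^ k) * ((n.choose k : ℤ) * L ((k : ℤ) + s))
      = (∑ k ∈ range (2 * (n + 1)), (n.choose k : ℤ) * L ((k : ℤ) + s))
        + ∑ k ∈ range (2 * (n + 1)), (n.choose k : ℤ) * ((-1 : ℤ) ^ k * L ((k : ℤ) + s)) := by
    rw [← Finset.sum_add_distrib]
    apply Finset.sum_congr rfl; intro k _; ring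
  rw [hsplit]
  have htrim : ∀ g : ℕ → ℤ,
      ∑ k ∈ range (2 * (n + 1)), (n.choose k : ℤ) * g k
        = ∑ k ∈ range (n + 1), (n.choose k : ℤ) * g k := by
    intro g
    symm
    apply Finset.sum_subset
    · intro x hx; simp at hx ⊢; omega
    · intro x _ hx
      simp only [Finset.mem_range, not_lt] at hx
      rw [Nat.choose_eq_zero_of_lt (by omega)]
      simp
  rw [htrim (fun k => L ((k : ℤ) + s)), htrim (fun k => (-1 : ℤ) ^ k * L ((k : ℤ) + s))]
  rw [S1 L hL n s, S2 L hL n s]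
  congr 1
  rcases le_or_gt s (n : ℤ) with h | h
  · obtain ⟨m, hm⟩ : ∃ m : ℕ, ((n : ℤ) - s) = (m : ℤ) :=
      ⟨((n : ℤ) - s).natAbs, by rw [Int.natAbs_of_nonneg (by omega)]⟩
    have hx : s - (n : ℤ) = -(m : ℤ) := by omega
    rw [hx, hm, Lneg L hL0 hL1 hL]
    have hpar : (-1 : ℤ) ^ n * (-1 : ℤ) ^ m = (-1 : ℤ) ^ s.natAbs := by
      rw [← pow_add]
      have h2 : (n + m) % 2 = s.natAbs % 2 := by omega
      rw [neg_one_pow_eq_pow_mod_two, h2, ← neg_one_pow_eq_pow_mod_two]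
    rw [← mul_assoc, hpar]
  · obtain ⟨m, hm⟩ : ∃ m : ℕ, s - (n : ℤ) = (m : ℤ) :=
      ⟨(s - (n : ℤ)).natAbs, by rw [Int.natAbs_of_nonneg (by omega)]⟩
    have hneg : (n : ℤ) - s = -(m : ℤ) := by omega
    rw [hneg, hm, Lneg L hL0 hL1 hL]
    have hpar : (-1 : ℤ) ^ s.natAbs * (-1 : ℤ) ^ m = (-1 : ℤ) ^ n := by
      rw [← pow_add]
      have h2 : (s.natAbs + m) % 2 = n % 2 := by omega
      rw [neg_one_pow_eq_pow_mod_two, h2, ← neg_one_pow_eq_pow_mod_two]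
    rw [← mul_assoc, hpar]
end

section
/- For every non-negative integer n and every integer s, ∑_{k=0}^{⌊n/2⌋} C(n, 2k) * F(6k+s) = 2^(n-1) * (F(2n+s) + (-1)^n * F(n+s)); equivalently, 2 * ∑_{k=0}^{⌊n/2⌋} C(n, 2k) * F(6k+s) = 2^n * (F(2n+s) + (-1)^n * F(n+s)). -/
section aux

variable (F : ℤ → ℤ)

lemma fib_step3a (hF : ∀ j : ℤ, F j = F (j - 1) + F (j - 2)) (j : ℤ) :
    F (j + 3) = 2 * F (j + 2) - F j := by
  have h1 := hF (j + 3)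
  have h2 := hF (j + 2)
  have e1 : j + 3 - 1 = j + 2 := by ring
  have e2 : j + 3 - 2 = j + 1 := by ring
  have e3 : j + 2 - 1 = j + 1 := by ring
  have e4 : j + 2 - 2 = j := by ring
  rw [e1, e2] at h1
  rw [e3, e4] at h2
  linarith

lemma fib_step3b (hF : ∀ j : ℤ, F j = F (j - 1) + F (j - 2)) (j : ℤ) :
    F (j + 3) = 2 * F (j + 1) + F j := by
  have h1 := hF (j + 3)
  have h2 := hF (j + 2)
  have e1 : j + 3 - 1 = j + 2 := by ring
  have e2 : j + 3 - 2 = j + 1 := by ring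
  have e3 : j + 2 - 1 = j + 1 := by ring
  have e4 : j + 2 - 2 = j := by ring
  rw [e1, e2] at h1
  rw [e3, e4] at h2
  linarith

lemma sumA (hF : ∀ j : ℤ, F j = F (j - 1) + F (j - 2)) :
    ∀ n : ℕ, ∀ s : ℤ, ∑ j ∈ Finset.range (n + 1), (n.choose j : ℤ) * F (3 * (j : ℤ) + s)
      = 2 ^ n * F (2 * (n : ℤ) + s) := by
  intro n
  induction n with
  | zero => intro s; simp
  | succ n ih =>
    intro s
    have h := Finset.sum_choose_succ_mul (fun i _ => F (3 * (i : ℤ) + s)) n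
    rw [show n + 1 + 1 = n + 2 from rfl, h]
    have h1 : ∑ i ∈ Finset.range (n + 1), (n.choose i : ℤ) * F (3 * ((i : ℕ) + 1 : ℕ) + s)
        = ∑ i ∈ Finset.range (n + 1), (n.choose i : ℤ) * F (3 * (i : ℤ) + (s + 3)) := by
      apply Finset.sum_congr rfl
      intro i _
      congr 1
      push_cast
      ring_nf
    rw [h1, ih s, ih (s + 3)]
    have key : F (2 * ((n : ℤ) + 1) + s) * 2 = F (2 * (n : ℤ) + s) + F (2 * (n : ℤ) + (s + 3)) := by
      have := fib_step3a F hF (2 * (n : ℤ) + s)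
      have e1 : 2 * (n : ℤ) + s + 3 = 2 * (n : ℤ) + (s + 3) := by ring
      have e2 : 2 * (n : ℤ) + s + 2 = 2 * ((n : ℤ) + 1) + s := by ring
      rw [e1, e2] at this
      linarith
    push_cast
    linear_combination -((2:ℤ) ^ n) * key

lemma sumB (hF : ∀ j : ℤ, F j = F (j - 1) + F (j - 2)) :
    ∀ n : ℕ, ∀ s : ℤ, ∑ j ∈ Finset.range (n + 1), (-1 : ℤ) ^ j * (n.choose j : ℤ) * F (3 * (j : ℤ) + s)
      = (-2) ^ n * F ((n : ℤ) + s) := by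
  intro n
  induction n with
  | zero => intro s; simp
  | succ n ih =>
    intro s
    have h := Finset.sum_choose_succ_mul (fun i _ => (-1 : ℤ) ^ i * F (3 * (i : ℤ) + s)) n
    have hrw : ∀ m : ℕ, ∀ f : ℕ → ℤ, ∑ j ∈ Finset.range m, (-1 : ℤ) ^ j * (f j) * F (3 * (j : ℤ) + s)
        = ∑ j ∈ Finset.range m, (f j) * ((-1 : ℤ) ^ j * F (3 * (j : ℤ) + s)) := by
      intro m f; apply Finset.sum_congr rfl; intro i _; ring
    rw [hrw]
    rw [show n + 1 + 1 = n + 2 from rfl] at h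
    rw [h]
    have h1 : ∑ i ∈ Finset.range (n + 1), (n.choose i : ℤ) * ((-1 : ℤ) ^ ((i : ℕ) + 1) * F (3 * ((i : ℕ) + 1 : ℕ) + s))
        = -∑ i ∈ Finset.range (n + 1), (-1 : ℤ) ^ i * (n.choose i : ℤ) * F (3 * (i : ℤ) + (s + 3)) := by
      rw [← Finset.sum_neg_distrib]
      apply Finset.sum_congr rfl
      intro i _
      have : ((3 : ℤ) * ((i : ℕ) + 1 : ℕ) + s) = 3 * (i : ℤ) + (s + 3) := by push_cast; ring
      rw [this, pow_succ]
      ring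
    have h0 : ∑ i ∈ Finset.range (n + 1), (n.choose i : ℤ) * ((-1 : ℤ) ^ i * F (3 * (i : ℤ) + s))
        = ∑ i ∈ Finset.range (n + 1), (-1 : ℤ) ^ i * (n.choose i : ℤ) * F (3 * (i : ℤ) + s) := by
      apply Finset.sum_congr rfl; intro i _; ring
    rw [h1, h0, ih s, ih (s + 3)]
    have key : F (((n : ℤ) + 1) + s) * (-2) = F ((n : ℤ) + s) - F ((n : ℤ) + (s + 3)) := by
      have := fib_step3b F hF ((n : ℤ) + s)
      have e1 : (n : ℤ) + s + 3 = (n : ℤ) + (s + 3) := by ring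
      have e2 : (n : ℤ) + s + 1 = ((n : ℤ) + 1) + s := by ring
      rw [e1, e2] at this
      linarith
    push_cast
    linear_combination -(((-2:ℤ)) ^ n) * key

end aux

theorem stmt2 (F : ℤ → ℤ) (hF0 : F 0 = 0) (hF1 : F 1 = 1)
    (hF : ∀ j : ℤ, F j = F (j - 1) + F (j - 2)) (n : ℕ) (s : ℤ) :
    2 * ∑ k ∈ Finset.range (n / 2 + 1), (n.choose (2 * k) : ℤ) * F (6 * (k : ℤ) + s)
      = 2 ^ n * (F (2 * (n : ℤ) + s) + (-1 : ℤ) ^ n * F ((n : ℤ) + s)) := by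
  have hA := sumA F hF n s
  have hB := sumB F hF n s
  have combine : ∑ j ∈ Finset.range (n + 1), ((n.choose j : ℤ) * F (3 * (j : ℤ) + s)
      + (-1 : ℤ) ^ j * (n.choose j : ℤ) * F (3 * (j : ℤ) + s))
      = 2 * ∑ k ∈ Finset.range (n / 2 + 1), (n.choose (2 * k) : ℤ) * F (6 * (k : ℤ) + s) := by
    rw [← Finset.sum_filter_add_sum_filter_not (Finset.range (n + 1)) (fun j => Even j)]
    have hodd : ∑ j ∈ (Finset.range (n + 1)).filter (fun j => ¬ Even j),
        ((n.choose j : ℤ) * F (3 * (j : ℤ) + s) + (-1 : ℤ) ^ j * (n.choose j : ℤ) * F (3 * (j : ℤ) + s)) = 0 := by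
      apply Finset.sum_eq_zero
      intro j hj
      rw [Finset.mem_filter] at hj
      have : (-1 : ℤ) ^ j = -1 := Odd.neg_one_pow (Nat.not_even_iff_odd.mp hj.2)
      rw [this]; ring
    rw [hodd, add_zero]
    have heven : ∑ j ∈ (Finset.range (n + 1)).filter (fun j => Even j),
        ((n.choose j : ℤ) * F (3 * (j : ℤ) + s) + (-1 : ℤ) ^ j * (n.choose j : ℤ) * F (3 * (j : ℤ) + s))
        = ∑ j ∈ (Finset.range (n + 1)).filter (fun j => Even j), 2 * ((n.choose j : ℤ) * F (3 * (j : ℤ) + s)) := by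
      apply Finset.sum_congr rfl
      intro j hj
      rw [Finset.mem_filter] at hj
      have : (-1 : ℤ) ^ j = 1 := Even.neg_one_pow hj.2
      rw [this]; ring
    rw [heven, ← Finset.mul_sum]
    congr 1
    apply Finset.sum_nbij' (fun j => j / 2) (fun k => 2 * k)
    · intro j hj
      rw [Finset.mem_filter, Finset.mem_range] at hj
      rw [Finset.mem_range]
      have := Nat.div_le_div_right (c := 2) (Nat.lt_succ_iff.mp hj.1)
      omega
    · intro k hk
      rw [Finset.mem_range] at hk
      rw [Finset.mem_filter, Finset.mem_range]
      constructor
      · omega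
      · exact ⟨k, by ring⟩
    · intro j hj
      rw [Finset.mem_filter] at hj
      obtain ⟨m, hm⟩ := hj.2
      omega
    · intro k hk
      omega
    · intro j hj
      rw [Finset.mem_filter] at hj
      obtain ⟨m, hm⟩ := hj.2
      have hdiv : j / 2 = m := by omega
      have h2m : m + m = 2 * m := by ring
      rw [hdiv, hm, h2m]
      congr 1
      push_cast
      ring
  rw [Finset.sum_add_distrib, hA, hB] at combine
  rw [← combine]
  have : ((-2 : ℤ)) ^ n = 2 ^ n * (-1) ^ n := by
    rw [← mul_pow]; norm_num
  rw [this]; ring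
end

section
/- For every non-negative integer n and all integers s and j, 2 * ∑_{k=0}^{n} C(2n, 2k) * L(j(4k+s)) = (L(j)^(2n) + 5^n * F(j)^(2n)) * L(j(2n+s)). -/
noncomputable def ph : ℝ := (1 + Real.sqrt 5) / 2
noncomputable def ps : ℝ := (1 - Real.sqrt 5) / 2

lemma sqrt5_sq : Real.sqrt 5 ^ 2 = 5 := Real.sq_sqrt (by norm_num)

lemma sqrt5_gt_one : (1:ℝ) < Real.sqrt 5 := by
  rw [show (1:ℝ) = Real.sqrt 1 from Real.sqrt_one.symm]
  exact Real.sqrt_lt_sqrt (by norm_num) (by norm_num)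

lemma ph_ne : ph ≠ 0 := by
  have := sqrt5_gt_one; unfold ph; positivity

lemma ps_ne : ps ≠ 0 := by
  have := sqrt5_gt_one; unfold ps; intro h
  nlinarith [h]

lemma ph_mul_ps : ph * ps = -1 := by
  unfold ph ps; have := sqrt5_sq; ring_nf; nlinarith [sqrt5_sq]

lemma ph_sq : ph ^ 2 = ph + 1 := by
  unfold ph; nlinarith [sqrt5_sq]

lemma ps_sq : ps ^ 2 = ps + 1 := by
  unfold ps; nlinarith [sqrt5_sq]

lemma zrec (x : ℝ) (hx : x ≠ 0) (h2 : x ^ 2 = x + 1) (m : ℤ) :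
    x ^ (m + 1) = x ^ m + x ^ (m - 1) := by
  have h1 : x ^ (m + 1) = x ^ (m - 1) * x ^ 2 := by
    rw [← zpow_natCast x 2, ← zpow_add₀ hx]; ring_nf
  have h3 : x ^ m = x ^ (m - 1) * x := by
    rw [← zpow_add_one₀ hx]; ring_nf
  rw [h1, h2, h3]; ring

lemma key (f g : ℤ → ℝ) (hf : ∀ m : ℤ, f (m + 1) = f m + f (m - 1))
    (hg : ∀ m : ℤ, g (m + 1) = g m + g (m - 1))
    (h0 : f 0 = g 0) (h1 : f 1 = g 1) : ∀ m : ℤ, f m = g m := by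
  have H : ∀ m : ℤ, f m = g m ∧ f (m + 1) = g (m + 1) := by
    intro m
    induction m using Int.induction_on with
    | zero => exact ⟨h0, h1⟩
    | succ k ih =>
      refine ⟨ih.2, ?_⟩
      have hfk := hf (k + 1); have hgk := hg (k + 1)
      simp only [add_sub_cancel_right] at hfk hgk
      rw [hfk, hgk, ih.1, ih.2]
    | pred k ih =>
      constructor
      · have hfk := hf (-k); have hgk := hg (-k)
        have e1 : (-k : ℤ) - 1 = -(k+1) := by ring
        rw [e1] at hfk hgk
        rw [e1]
        have hf2 : f (-(k+1)) = f (-k + 1) - f (-k) := by rw [hfk]; ring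
        have hg2 : g (-(k+1)) = g (-k + 1) - g (-k) := by rw [hgk]; ring
        rw [hf2, hg2, ih.1, ih.2]
      · have e : (-(k:ℤ) - 1) + 1 = -k := by ring
        rw [e]; exact ih.1
  exact fun m => (H m).1

lemma evensum (x : ℝ) (n : ℕ) :
    2 * ∑ k ∈ Finset.range (n + 1), ((2 * n).choose (2 * k) : ℝ) * x ^ (2 * k)
      = (1 + x) ^ (2 * n) + (1 - x) ^ (2 * n) := by
  have h1 : (1 + x) ^ (2*n) = ∑ i ∈ Finset.range (2*n+1), ((2*n).choose i : ℝ) * x ^ i := by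
    rw [add_comm, add_pow]
    exact Finset.sum_congr rfl (fun i _ => by ring)
  have h2 : (1 - x) ^ (2*n) = ∑ i ∈ Finset.range (2*n+1), ((2*n).choose i : ℝ) * (-x) ^ i := by
    rw [sub_eq_add_neg, add_comm, add_pow]
    exact Finset.sum_congr rfl (fun i _ => by ring)
  rw [h1, h2, ← Finset.sum_add_distrib]
  have h3 : ∑ i ∈ Finset.range (2*n+1),
      (((2*n).choose i : ℝ) * x ^ i + ((2*n).choose i : ℝ) * (-x) ^ i)
      = ∑ i ∈ (Finset.range (2*n+1)).filter (fun i => Even i),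
      (((2*n).choose i : ℝ) * x ^ i + ((2*n).choose i : ℝ) * (-x) ^ i) := by
    rw [← Finset.sum_filter_add_sum_filter_not (Finset.range (2*n+1)) (fun i => Even i)]
    have : ∑ i ∈ (Finset.range (2*n+1)).filter (fun i => ¬ Even i),
        (((2*n).choose i : ℝ) * x ^ i + ((2*n).choose i : ℝ) * (-x) ^ i) = 0 := by
      apply Finset.sum_eq_zero
      intro i hi
      simp only [Finset.mem_filter] at hi
      have hodd : Odd i := Nat.not_even_iff_odd.mp hi.2
      rw [hodd.neg_pow]
      ring
    rw [this, add_zero]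
  rw [h3]
  have h4 : ∑ i ∈ (Finset.range (2*n+1)).filter (fun i => Even i),
      (((2*n).choose i : ℝ) * x ^ i + ((2*n).choose i : ℝ) * (-x) ^ i)
      = ∑ k ∈ Finset.range (n+1),
      (((2*n).choose (2*k) : ℝ) * x ^ (2*k) + ((2*n).choose (2*k) : ℝ) * (-x) ^ (2*k)) := by
    apply Finset.sum_nbij' (i := fun i => i / 2) (j := fun k => 2 * k)
    · intro a ha
      simp only [Finset.mem_filter, Finset.mem_range] at ha ⊢
      omega
    · intro a ha
      simp only [Finset.mem_range] at ha
      simp only [Finset.mem_filter, Finset.mem_range]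
      exact ⟨by omega, even_two_mul a⟩
    · intro a ha
      simp only [Finset.mem_filter, Finset.mem_range] at ha
      obtain ⟨-, c, hc⟩ := ha
      omega
    · intro a _; omega
    · intro a ha
      simp only [Finset.mem_filter, Finset.mem_range] at ha
      obtain ⟨-, c, hc⟩ := ha
      have e : 2 * (a / 2) = a := by omega
      rw [e]
  rw [h4, Finset.mul_sum]
  refine Finset.sum_congr rfl (fun k _ => ?_)
  have he : Even (2*k) := even_two_mul k
  rw [he.neg_pow]
  ring

lemma ph_add_ps : ph + ps = 1 := by unfold ph ps; ring

lemma ph_sub_ps : ph - ps = Real.sqrt 5 := by unfold ph ps; ring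

theorem stmt5 (F : ℤ → ℤ) (hF0 : F 0 = 0) (hF1 : F 1 = 1)
    (hF : ∀ j : ℤ, F j = F (j - 1) + F (j - 2)) (L : ℤ → ℤ) (hL0 : L 0 = 2) (hL1 : L 1 = 1)
    (hL : ∀ j : ℤ, L j = L (j - 1) + L (j - 2)) (n : ℕ) (s j : ℤ) :
    2 * ∑ k ∈ Finset.range (n + 1), ((2 * n).choose (2 * k) : ℤ) * L (j * (4 * (k : ℤ) + s))
      = (L j ^ (2 * n) + 5 ^ n * F j ^ (2 * n)) * L (j * (2 * (n : ℤ) + s)) := by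
  have hLr : ∀ m : ℤ, ph ^ m + ps ^ m = (L m : ℝ) := by
    apply key
    · intro m; rw [zrec ph ph_ne ph_sq, zrec ps ps_ne ps_sq]; ring
    · intro m
      have h := hL (m + 1)
      have e1 : m + 1 - 1 = m := by ring
      have e2 : m + 1 - 2 = m - 1 := by ring
      rw [e1, e2] at h
      rw [h]; push_cast; ring
    · simp only [zpow_zero]; rw [hL0]; norm_num
    · simp only [zpow_one, hL1, Int.cast_one]; exact ph_add_ps
  have hFr : ∀ m : ℤ, ph ^ m - ps ^ m = Real.sqrt 5 * (F m : ℝ) := by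
    apply key
    · intro m; rw [zrec ph ph_ne ph_sq, zrec ps ps_ne ps_sq]; ring
    · intro m
      have h := hF (m + 1)
      have e1 : m + 1 - 1 = m := by ring
      have e2 : m + 1 - 2 = m - 1 := by ring
      rw [e1, e2] at h
      rw [h]; push_cast; ring
    · simp [hF0]
    · simp only [zpow_one, hF1, Int.cast_one, mul_one]; exact ph_sub_ps
  set y := ph ^ (2 * j) with hy
  set z := ps ^ (2 * j) with hz
  have hyz : y * z = 1 := by
    rw [hy, hz, ← mul_zpow, ph_mul_ps]
    exact Even.neg_one_zpow ⟨j, by ring⟩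
  have hmul : ph ^ j * ps ^ j = (-1 : ℝ) ^ j := by rw [← mul_zpow, ph_mul_ps]
  have hy2 : y = ph ^ j * ph ^ j := by rw [hy, two_mul, zpow_add₀ ph_ne]
  have hz2 : z = ps ^ j * ps ^ j := by rw [hz, two_mul, zpow_add₀ ps_ne]
  have hyp : ∀ m : ℕ, y ^ m = ph ^ (2 * j * (m : ℤ)) := fun m => by
    rw [hy, ← zpow_natCast (ph ^ (2 * j)) m, ← zpow_mul]
  have hzp : ∀ m : ℕ, z ^ m = ps ^ (2 * j * (m : ℤ)) := fun m => by
    rw [hz, ← zpow_natCast (ps ^ (2 * j)) m, ← zpow_mul]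
  have hterm : ∀ k : ℕ, (L (j * (4 * (k : ℤ) + s)) : ℝ)
      = ph ^ (j * s) * y ^ (2 * k) + ps ^ (j * s) * z ^ (2 * k) := by
    intro k
    rw [← hLr]
    have e : j * (4 * (k : ℤ) + s) = j * s + (2 * j) * ((2 * k : ℕ) : ℤ) := by
      push_cast; ring
    rw [e, zpow_add₀ ph_ne, zpow_add₀ ps_ne, ← hyp, ← hzp]
  have hsum : (2 * ∑ k ∈ Finset.range (n + 1),
        ((2 * n).choose (2 * k) : ℝ) * (L (j * (4 * (k : ℤ) + s)) : ℝ))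
      = ph ^ (j * s) * ((1 + y) ^ (2 * n) + (1 - y) ^ (2 * n))
        + ps ^ (j * s) * ((1 + z) ^ (2 * n) + (1 - z) ^ (2 * n)) := by
    have hc : ∀ k ∈ Finset.range (n + 1),
        ((2 * n).choose (2 * k) : ℝ) * (L (j * (4 * (k : ℤ) + s)) : ℝ)
        = ph ^ (j * s) * (((2 * n).choose (2 * k) : ℝ) * y ^ (2 * k))
          + ps ^ (j * s) * (((2 * n).choose (2 * k) : ℝ) * z ^ (2 * k)) := by
      intro k _; rw [hterm k]; ring
    rw [Finset.sum_congr rfl hc, Finset.sum_add_distrib, ← Finset.mul_sum, ← Finset.mul_sum,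
      ← evensum y n, ← evensum z n]
    ring
  have h1y : (1 + y) ^ 2 = y * (y + z + 2) := by linear_combination -hyz
  have h2y : (1 - y) ^ 2 = y * (y + z - 2) := by linear_combination -hyz
  have h1z : (1 + z) ^ 2 = z * (y + z + 2) := by linear_combination -hyz
  have h2z : (1 - z) ^ 2 = z * (y + z - 2) := by linear_combination -hyz
  have hpy : (1 + y) ^ (2 * n) = y ^ n * (y + z + 2) ^ n := by rw [pow_mul, h1y, mul_pow]
  have hmy : (1 - y) ^ (2 * n) = y ^ n * (y + z - 2) ^ n := by rw [pow_mul, h2y, mul_pow]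
  have hpz : (1 + z) ^ (2 * n) = z ^ n * (y + z + 2) ^ n := by rw [pow_mul, h1z, mul_pow]
  have hmz : (1 - z) ^ (2 * n) = z ^ n * (y + z - 2) ^ n := by rw [pow_mul, h2z, mul_pow]
  have hLj : (L j : ℝ) ^ 2 = y + z + 2 * (-1 : ℝ) ^ j := by
    rw [← hLr j, hy2, hz2, ← hmul]; ring
  have hFj : 5 * (F j : ℝ) ^ 2 = y + z - 2 * (-1 : ℝ) ^ j := by
    have h5 : (Real.sqrt 5 * (F j : ℝ)) ^ 2 = 5 * (F j : ℝ) ^ 2 := by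
      rw [mul_pow, sqrt5_sq]
    rw [← h5, ← hFr j, hy2, hz2, ← hmul]; ring
  have hS : ((L j : ℝ) ^ 2) ^ n + (5 * (F j : ℝ) ^ 2) ^ n
      = (y + z + 2) ^ n + (y + z - 2) ^ n := by
    rcases Int.even_or_odd j with he | ho
    · have e : ((-1 : ℝ)) ^ j = 1 := Even.neg_one_zpow he
      rw [hLj, hFj, e]; norm_num
    · have e : ((-1 : ℝ)) ^ j = -1 := Odd.neg_one_zpow ho
      rw [hLj, hFj, e]
      have e1 : y + z + 2 * (-1 : ℝ) = y + z - 2 := by ring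
      have e2 : y + z - 2 * (-1 : ℝ) = y + z + 2 := by ring
      rw [e1, e2, add_comm]
  have hfin : ph ^ (j * s) * y ^ n + ps ^ (j * s) * z ^ n
      = (L (j * (2 * (n : ℤ) + s)) : ℝ) := by
    rw [← hLr]
    have e : j * (2 * (n : ℤ) + s) = j * s + (2 * j) * (n : ℤ) := by ring
    rw [e, zpow_add₀ ph_ne, zpow_add₀ ps_ne, ← hyp, ← hzp]
  have main : (2 * ∑ k ∈ Finset.range (n + 1),
        ((2 * n).choose (2 * k) : ℝ) * (L (j * (4 * (k : ℤ) + s)) : ℝ))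
      = ((L j : ℝ) ^ (2 * n) + 5 ^ n * (F j : ℝ) ^ (2 * n)) * (L (j * (2 * (n : ℤ) + s)) : ℝ) := by
    rw [hsum, hpy, hmy, hpz, hmz,
      show ((L j : ℝ)) ^ (2 * n) = ((L j : ℝ) ^ 2) ^ n from pow_mul _ 2 n,
      show (5 : ℝ) ^ n * (F j : ℝ) ^ (2 * n) = (5 * (F j : ℝ) ^ 2) ^ n from by
        rw [pow_mul, mul_pow],
      hS, ← hfin]
    ring
  exact_mod_cast main
end

section
/- For every positive integer n, 2 * ∑_{k=1}^{n} C(2n-1, 2k-1) * F(2k-1) equals F(2n-1)*L(n-1)*L(n) if n is odd, and equals 5*F(2n-1)*F(n-1)*F(n) if n is even. -/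
open Finset in
lemma sum_choose_mul' (g : ℕ → ℤ) (m : ℕ) :
    ∑ k ∈ range (m+2), ((m+1).choose k : ℤ) * g k
      = ∑ k ∈ range (m+1), (m.choose k : ℤ) * g k
      + ∑ k ∈ range (m+1), (m.choose k : ℤ) * g (k+1) := by
  rw [Finset.sum_range_succ' (fun k => ((m+1).choose k : ℤ) * g k)]
  have h : ∀ k, (((m+1).choose (k+1) : ℤ)) = (m.choose k : ℤ) + (m.choose (k+1) : ℤ) := by
    intro k; exact_mod_cast congrArg (Nat.cast (R := ℤ)) (Nat.choose_succ_succ m k)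
  calc (∑ k ∈ range (m+1), ((m+1).choose (k+1) : ℤ) * g (k+1)) + ((m+1).choose 0 : ℤ) * g 0
      = (∑ k ∈ range (m+1), ((m.choose k : ℤ) * g (k+1) + (m.choose (k+1) : ℤ) * g (k+1)))
        + (m.choose 0 : ℤ) * g 0 := by
        refine congrArg₂ (· + ·) (Finset.sum_congr rfl fun k _ => ?_) (by simp)
        rw [h k, add_mul]
    _ = ((∑ k ∈ range (m+1), (m.choose (k+1) : ℤ) * g (k+1)) + (m.choose 0 : ℤ) * g 0)
        + ∑ k ∈ range (m+1), (m.choose k : ℤ) * g (k+1) := by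
        rw [Finset.sum_add_distrib]; ring
    _ = (∑ k ∈ range (m+2), (m.choose k : ℤ) * g k)
        + ∑ k ∈ range (m+1), (m.choose k : ℤ) * g (k+1) := by
        rw [Finset.sum_range_succ' (fun k => (m.choose k : ℤ) * g k)]
    _ = _ := by
        rw [Finset.sum_range_succ (fun k => (m.choose k : ℤ) * g k)]
        simp [Nat.choose_succ_self]

section Aux
open Finset
variable (F : ℕ → ℤ) (hF0 : F 0 = 0) (hF1 : F 1 = 1)
  (hF : ∀ n : ℕ, F (n + 2) = F (n + 1) + F n)
include hF0 hF1 hF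

set_option linter.unusedSectionVars false

lemma sumA' : ∀ m : ℕ,
    (∑ k ∈ range (m+1), (m.choose k : ℤ) * F k = F (2*m)) ∧
    (∑ k ∈ range (m+1), (m.choose k : ℤ) * F (k+1) = F (2*m+1)) := by
  intro m
  induction m with
  | zero => simp
  | succ m ih =>
    obtain ⟨h1, h2⟩ := ih
    have e1 : 2*(m+1) = 2*m+2 := by ring
    have e2 : 2*(m+1)+1 = 2*m+1+2 := by ring
    constructor
    · rw [sum_choose_mul' F m, h1, h2, e1, hF (2*m)]; ring
    · rw [sum_choose_mul' (fun k => F (k+1)) m]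
      have : ∑ k ∈ range (m+1), (m.choose k : ℤ) * F (k+1+1)
          = ∑ k ∈ range (m+1), ((m.choose k : ℤ) * F (k+1) + (m.choose k : ℤ) * F k) := by
        refine Finset.sum_congr rfl fun k _ => ?_
        rw [hF k]; ring
      rw [this, Finset.sum_add_distrib, h1, h2, e2, hF (2*m+1),
        show 2*m+1+1 = 2*m+2 by ring, hF (2*m)]
      ring

lemma sumB' : ∀ m : ℕ,
    (∑ k ∈ range (m+2), (-1:ℤ)^k * ((m+1).choose k : ℤ) * F k = -F (m+1)) ∧
    (∑ k ∈ range (m+2), (-1:ℤ)^k * ((m+1).choose k : ℤ) * F (k+1) = F m) := by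
  have key : ∀ (m : ℕ) (g : ℕ → ℤ),
      ∑ k ∈ range (m+2), (-1:ℤ)^k * ((m+1).choose k : ℤ) * g k
        = ∑ k ∈ range (m+1), (-1:ℤ)^k * (m.choose k : ℤ) * g k
        - ∑ k ∈ range (m+1), (-1:ℤ)^k * (m.choose k : ℤ) * g (k+1) := by
    intro m g
    have := sum_choose_mul' (fun k => (-1:ℤ)^k * g k) m
    simp only [pow_succ] at this
    calc ∑ k ∈ range (m+2), (-1:ℤ)^k * ((m+1).choose k : ℤ) * g k
        = ∑ k ∈ range (m+2), ((m+1).choose k : ℤ) * ((-1:ℤ)^k * g k) := by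
          refine Finset.sum_congr rfl fun k _ => by ring
      _ = ∑ k ∈ range (m+1), (m.choose k : ℤ) * ((-1:ℤ)^k * g k)
          + ∑ k ∈ range (m+1), (m.choose k : ℤ) * ((-1:ℤ)^k * (-1) * g (k+1)) := this
      _ = _ := by
          rw [sub_eq_add_neg, ← Finset.sum_neg_distrib]
          refine congrArg₂ (· + ·) (Finset.sum_congr rfl fun k _ => by ring)
            (Finset.sum_congr rfl fun k _ => by ring)
  intro m
  induction m with
  | zero =>
    constructor
    · norm_num [Finset.sum_range_succ, hF0, hF1]
    · have h2 : F 2 = 1 := by simpa [hF0, hF1] using hF 0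
      simp [Finset.sum_range_succ, hF1, h2, hF0]
  | succ m ih =>
    obtain ⟨h1, h2⟩ := ih
    have hV : ∑ k ∈ range (m+2), (-1:ℤ)^k * ((m+1).choose k : ℤ) * F (k+2)
        = F m + (- F (m+1)) := by
      calc ∑ k ∈ range (m+2), (-1:ℤ)^k * ((m+1).choose k : ℤ) * F (k+2)
          = ∑ k ∈ range (m+2), ((-1:ℤ)^k * ((m+1).choose k : ℤ) * F (k+1)
            + (-1:ℤ)^k * ((m+1).choose k : ℤ) * F k) := by
            refine Finset.sum_congr rfl fun k _ => ?_
            rw [hF k]; ring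
        _ = _ := by rw [Finset.sum_add_distrib, h1, h2]
    constructor
    · rw [key (m+1) F, h1, h2, show m+1+1 = m+2 from rfl, hF m]; ring
    · rw [key (m+1) (fun k => F (k+1)), h2]
      have : ∑ k ∈ range (m+2), (-1:ℤ)^k * ((m+1).choose k : ℤ) * F (k+1+1)
          = F m + (- F (m+1)) := hV
      rw [this]; ring

lemma doubling' : ∀ a : ℕ,
    F (2*a) = F a * (2 * F (a+1) - F a) ∧ F (2*a+1) = F (a+1)^2 + F a^2 := by
  intro a
  induction a with
  | zero => simp [hF0, hF1]
  | succ a ih =>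
    obtain ⟨h1, h2⟩ := ih
    have e1 : 2*(a+1) = 2*a+2 := by ring
    have e2 : 2*(a+1)+1 = 2*a+1+2 := by ring
    constructor
    · rw [e1, hF (2*a), h1, h2, hF a]; ring
    · rw [e2, hF (2*a+1), h2, show 2*a+1+1 = 2*a+2 by omega, hF (2*a), h1, h2, hF a]; ring

lemma cassini' : ∀ a : ℕ, F (a+1)^2 - F (a+1) * F a - F a^2 = (-1)^a := by
  intro a
  induction a with
  | zero => simp [hF0, hF1]
  | succ a ih =>
    rw [hF a, pow_succ]
    linear_combination (-1 : ℤ) * ih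

variable (L : ℕ → ℤ) (hL0 : L 0 = 2) (hL1 : L 1 = 1)
  (hL : ∀ n : ℕ, L (n + 2) = L (n + 1) + L n)
include hL0 hL1 hL

lemma lucasF' : ∀ a : ℕ, L a = 2 * F (a+1) - F a := by
  have key : ∀ a : ℕ, L a = 2 * F (a+1) - F a ∧ L (a+1) = 2 * F (a+2) - F (a+1) := by
    intro a
    induction a with
    | zero =>
      have h2 : F 2 = 1 := by simpa [hF0, hF1] using hF 0
      exact ⟨by rw [hL0, hF1, hF0]; ring, by rw [hL1, h2, hF1]; ring⟩
    | succ a ih =>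
      obtain ⟨h1, h2⟩ := ih
      refine ⟨h2, ?_⟩
      rw [hL a, h1, h2, hF (a+1), hF a]; ring
  exact fun a => (key a).1

end Aux

open Finset in
lemma parity_extract' (F : ℕ → ℤ) (m : ℕ) : ∀ n : ℕ,
    ∑ k ∈ range (2*n), ((1:ℤ) - (-1)^k) * ((m.choose k : ℤ) * F k)
      = 2 * ∑ j ∈ Icc 1 n, (m.choose (2*j-1) : ℤ) * F (2*j-1) := by
  intro n
  induction n with
  | zero => simp
  | succ n ih =>
    have e : 2*(n+1) = 2*n+1+1 := by ring
    rw [e, Finset.sum_range_succ, Finset.sum_range_succ, ih,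
      Finset.sum_Icc_succ_top (by omega : 1 ≤ n+1)]
    have h1 : ((-1:ℤ))^(2*n) = 1 := by rw [pow_mul]; norm_num
    have h2 : ((-1:ℤ))^(2*n+1) = -1 := by rw [pow_succ, pow_mul]; norm_num
    have h3 : 2*(n+1)-1 = 2*n+1 := by omega
    rw [h1, h2, h3]; ring

theorem stmt8 (F : ℕ → ℤ) (hF0 : F 0 = 0) (hF1 : F 1 = 1)
    (hF : ∀ n : ℕ, F (n + 2) = F (n + 1) + F n) (L : ℕ → ℤ) (hL0 : L 0 = 2) (hL1 : L 1 = 1)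
    (hL : ∀ n : ℕ, L (n + 2) = L (n + 1) + L n) (n : ℕ) (hn : 0 < n) :
    (Odd n → 2 * ∑ k ∈ Finset.Icc 1 n, ((2 * n - 1).choose (2 * k - 1) : ℤ) * F (2 * k - 1)
        = F (2 * n - 1) * L (n - 1) * L n) ∧
    (Even n → 2 * ∑ k ∈ Finset.Icc 1 n, ((2 * n - 1).choose (2 * k - 1) : ℤ) * F (2 * k - 1)
        = 5 * F (2 * n - 1) * F (n - 1) * F n) := by
  obtain ⟨a, rfl⟩ : ∃ a, n = a + 1 := ⟨n - 1, by omega⟩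
  simp only [show 2*(a+1)-1 = 2*a+1 from by omega, show a+1-1 = a from by omega]
  have hA := (sumA' F hF0 hF1 hF (2*a+1)).1
  have hB := (sumB' F hF0 hF1 hF (2*a)).1
  rw [show 2*a+1+1 = 2*(a+1) from by ring] at hA
  rw [show 2*a+2 = 2*(a+1) from by ring] at hB
  have hsplit : ∑ k ∈ Finset.range (2*(a+1)), ((1:ℤ) - (-1)^k) * (((2*a+1).choose k : ℤ) * F k)
      = (∑ k ∈ Finset.range (2*(a+1)), ((2*a+1).choose k : ℤ) * F k)
        - ∑ k ∈ Finset.range (2*(a+1)), (-1:ℤ)^k * ((2*a+1).choose k : ℤ) * F k := by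
    rw [← Finset.sum_sub_distrib]
    exact Finset.sum_congr rfl fun k _ => by ring
  have hKey : 2 * ∑ k ∈ Finset.Icc 1 (a+1), ((2*a+1).choose (2*k-1) : ℤ) * F (2*k-1)
      = F (2*(2*a+1)) + F (2*a+1) := by
    rw [← parity_extract' F (2*a+1) (a+1), hsplit, hA, hB]; ring
  rw [hKey]
  have d2 : F (2*a+1) = F (a+1)^2 + F a^2 := (doubling' F hF0 hF1 hF a).2
  have d3 : F (2*(2*a+1)) = F (2*a+1) * (2 * F (2*a+2) - F (2*a+1)) := by
    have := (doubling' F hF0 hF1 hF (2*a+1)).1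
    rwa [show 2*a+1+1 = 2*a+2 from by ring] at this
  have d4 : F (2*a+2) = F (a+1) * (2 * F (a+2) - F (a+1)) := by
    have := (doubling' F hF0 hF1 hF (a+1)).1
    rwa [show 2*(a+1) = 2*a+2 from by ring] at this
  have hD : F (a+2) = F (a+1) + F a := hF a
  have hLa : L a = 2 * F (a+1) - F a := lucasF' F hF0 hF1 hF L hL0 hL1 hL a
  have hLa1 : L (a+1) = 2 * F (a+2) - F (a+1) := lucasF' F hF0 hF1 hF L hL0 hL1 hL (a+1)
  have hcas := cassini' F hF0 hF1 hF a
  constructor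
  · intro hodd
    have ha : Even a := by
      rcases hodd with ⟨t, ht⟩; exact ⟨t, by omega⟩
    rw [ha.neg_one_pow] at hcas
    rw [d3, d4, d2, hD, hLa, hLa1, hD]
    linear_combination (-(F (a+1)^2 + F a^2)) * hcas
  · intro heven
    have ha : Odd a := by
      rcases heven with ⟨t, ht⟩; exact ⟨t - 1, by omega⟩
    rw [ha.neg_one_pow] at hcas
    rw [d3, d4, d2, hD]
    linear_combination (F (a+1)^2 + F a^2) * hcas
end

section
/- For every non-negative integer n and every integer s, ∑_{k=0}^{n} C(2n, 2k) * 5^k * F(6k+s) = 2^(2n-1) * (4^n * F(4n+s) + F(6n+s)); equivalently, 2 * ∑_{k=0}^{n} C(2n, 2k) * 5^k * F(6k+s) = 4^n * (4^n * F(4n+s) + F(6n+s)). -/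
open Finset

private lemma sum_range_two_mul {R : Type*} [CommRing R] (n : ℕ) (g : ℕ → R) :
    ∑ j ∈ range (2 * n), g j = ∑ k ∈ range n, (g (2 * k) + g (2 * k + 1)) := by
  induction n with
  | zero => simp
  | succ n ih =>
      rw [show 2 * (n + 1) = 2 * n + 1 + 1 from by ring, sum_range_succ, sum_range_succ,
        sum_range_succ, ih]
      ring

private lemma evenPowSum {R : Type*} [CommRing R] (u : R) (n : ℕ) :
    (1 + u) ^ (2 * n) + (1 - u) ^ (2 * n)
      = ∑ k ∈ range (n + 1), 2 * ((2 * n).choose (2 * k) : R) * u ^ (2 * k) := by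
  have h1 : (1 + u) ^ (2 * n)
      = ∑ j ∈ range (2 * n + 1), u ^ j * 1 ^ (2 * n - j) * ((2 * n).choose j : R) := by
    rw [← add_pow]; ring_nf
  have h2 : (1 - u) ^ (2 * n)
      = ∑ j ∈ range (2 * n + 1), (-u) ^ j * 1 ^ (2 * n - j) * ((2 * n).choose j : R) := by
    rw [← add_pow]; ring_nf
  rw [h1, h2, ← sum_add_distrib, sum_range_succ, sum_range_two_mul, sum_range_succ]
  congr 1
  · apply sum_congr rfl
    intro k hk
    have he : (-u) ^ (2 * k) = u ^ (2 * k) := Even.neg_pow (even_two_mul k) u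
    have ho : (-u) ^ (2 * k + 1) = -(u ^ (2 * k + 1)) := Odd.neg_pow ⟨k, by ring⟩ u
    rw [he, ho]
    ring
  · have he : (-u) ^ (2 * n) = u ^ (2 * n) := Even.neg_pow (even_two_mul n) u
    rw [he]
    ring
private lemma key_s15 {R : Type*} [CommRing R] (y : R) (hy : y * y = 2 * y + 4) (n : ℕ) :
    ∑ k ∈ range (n + 1),
        ((2 * ((2 * n).choose (2 * k)) * 5 ^ k * 64 ^ (n - k) : ℤ) : R) * y ^ (6 * k)
      = ((64 ^ n : ℤ) : R) * y ^ (4 * n) + ((4 ^ n : ℤ) : R) * y ^ (6 * n) := by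
  have hu : (2 * y + 3) * (2 * y + 3) = 20 * y + 25 := by linear_combination 4 * hy
  have hy3 : y ^ 3 = 8 * y + 8 := by linear_combination (y + 2) * hy
  have hy6 : y ^ 6 = 64 * (4 * y + 5) := by
    linear_combination (y ^ 3 + 8 * y + 8) * hy3 + 64 * hy
  push_cast
  have hstep : ∀ k ∈ range (n + 1),
      2 * ((2 * n).choose (2 * k) : R) * 5 ^ k * 64 ^ (n - k) * y ^ (6 * k)
        = (64 : R) ^ n * (2 * ((2 * n).choose (2 * k) : R) * (2 * y + 3) ^ (2 * k)) := by
    intro k hk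
    have hk' : k ≤ n := Nat.lt_succ_iff.mp (mem_range.mp hk)
    have h64 : (64 : R) ^ (n - k) * 64 ^ k = 64 ^ n := by
      rw [← pow_add, Nat.sub_add_cancel hk']
    have h5 : (5 : R) ^ k * y ^ (6 * k) = 64 ^ k * (2 * y + 3) ^ (2 * k) := by
      rw [pow_mul y, pow_mul (2 * y + 3), ← mul_pow, ← mul_pow]
      congr 1
      linear_combination 5 * hy6 - 64 * hu
    calc 2 * ((2 * n).choose (2 * k) : R) * 5 ^ k * 64 ^ (n - k) * y ^ (6 * k)
        = (2 * ((2 * n).choose (2 * k) : R) * 64 ^ (n - k)) * (5 ^ k * y ^ (6 * k)) := by ring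
      _ = (2 * ((2 * n).choose (2 * k) : R) * 64 ^ (n - k)) * (64 ^ k * (2 * y + 3) ^ (2 * k)) := by
          rw [h5]
      _ = (64 ^ (n - k) * 64 ^ k) * (2 * ((2 * n).choose (2 * k) : R) * (2 * y + 3) ^ (2 * k)) := by
          ring
      _ = (64 : R) ^ n * (2 * ((2 * n).choose (2 * k) : R) * (2 * y + 3) ^ (2 * k)) := by rw [h64]
  rw [sum_congr rfl hstep, ← mul_sum, ← evenPowSum]
  have hA : (1 + (2 * y + 3)) ^ (2 * n) = y ^ (4 * n) := by
    rw [pow_mul, pow_mul]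
    congr 1
    linear_combination (-y) * hy3 - 4 * hy
  have hB : (64 : R) ^ n * (1 - (2 * y + 3)) ^ (2 * n) = 4 ^ n * y ^ (6 * n) := by
    rw [pow_mul, pow_mul y, ← mul_pow, ← mul_pow]
    congr 1
    linear_combination (-4) * hy6 + 256 * hy
  rw [mul_add, hA, hB]

private def Y : Zsqrtd 5 := ⟨1, 1⟩

private lemma hYsq : Y * Y = 2 * Y + 4 := by
  have : (Y * Y).re = (2 * Y + 4).re ∧ (Y * Y).im = (2 * Y + 4).im := by
    constructor <;> simp [Y, Zsqrtd.re_mul, Zsqrtd.im_mul]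
  exact Zsqrtd.ext this.1 this.2

private def imH : Zsqrtd 5 →+ ℤ :=
  { toFun := Zsqrtd.im, map_zero' := rfl, map_add' := fun _ _ => rfl }

private def pH : Zsqrtd 5 →+ ℤ :=
  { toFun := fun z => z.re + z.im, map_zero' := rfl,
    map_add' := fun a b => by
      show (a + b).re + (a + b).im = _
      simp [Zsqrtd.re_add, Zsqrtd.im_add]; ring }

private lemma comp (F : ℤ → ℤ) (hF0 : F 0 = 0) (hF1 : F 1 = 1)
    (hF2 : ∀ j : ℤ, F (j + 2) = F (j + 1) + F j) (m : ℕ) :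
    (Y ^ m).re + (Y ^ m).im = 2 ^ m * F ((m : ℤ) + 1) ∧
      2 * (Y ^ m).im = 2 ^ m * F (m : ℤ) := by
  induction m with
  | zero => simp [hF0, hF1]
  | succ m ih =>
      obtain ⟨ih1, ih2⟩ := ih
      have hre : (Y ^ (m + 1)).re = (Y ^ m).re + 5 * (Y ^ m).im := by
        rw [pow_succ, Zsqrtd.re_mul]; simp [Y]
      have him : (Y ^ (m + 1)).im = (Y ^ m).re + (Y ^ m).im := by
        rw [pow_succ, Zsqrtd.im_mul]; simp [Y]
      have hrec := hF2 (m : ℤ)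
      constructor
      · rw [hre, him]
        push_cast
        rw [show ((m : ℤ) + 1) + 1 = (m : ℤ) + 2 from by ring]
        linear_combination 2 * ih1 + 2 * ih2 - (2 : ℤ) ^ (m + 1) * hrec
      · rw [him]
        push_cast
        linear_combination 2 * ih1

private lemma shiftF (F : ℤ → ℤ) (hF0 : F 0 = 0) (hF1 : F 1 = 1)
    (hF2 : ∀ j : ℤ, F (j + 2) = F (j + 1) + F j) (m : ℕ) :
    ∀ s : ℤ, F (s + m) = F ((m : ℤ) + 1) * F s + F (m : ℤ) * F (s - 1) := by
  induction m using Nat.twoStepInduction with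
  | zero =>
      intro s
      have h2 : F 2 = 1 := by have := hF2 0; simp [hF0, hF1] at this; omega
      simp [hF0, hF1]
  | one =>
      intro s
      have h2 : F 2 = 1 := by have := hF2 0; simp [hF0, hF1] at this; omega
      have h := hF2 (s - 1)
      rw [show s - 1 + 2 = s + 1 from by ring, show s - 1 + 1 = s from by ring] at h
      push_cast
      rw [h2, hF1]
      linarith [h]
  | more m ih0 ih1 =>
      intro s
      have e2 := hF2 (s + m)
      have em1 := ih1 s
      have em0 := ih0 s
      have c2 := hF2 ((m : ℤ) + 1)
      have c1 := hF2 (m : ℤ)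
      push_cast at em1 ⊢
      rw [show s + ((m : ℤ) + 2) = s + (m : ℤ) + 2 from by ring, e2]
      rw [show s + ((m : ℤ) + 1) = s + (m : ℤ) + 1 from by ring] at em1
      rw [show (m : ℤ) + 2 + 1 = (m : ℤ) + 1 + 2 from by ring]
      rw [show (m : ℤ) + 1 + 1 = (m : ℤ) + 2 from by ring] at em1 c2
      linear_combination em1 + em0 - (F s) * c2 - (F (s - 1)) * c1

theorem stmt15 (F : ℤ → ℤ) (hF0 : F 0 = 0) (hF1 : F 1 = 1)
    (hF : ∀ j : ℤ, F j = F (j - 1) + F (j - 2)) (n : ℕ) (s : ℤ) :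
    2 * ∑ k ∈ Finset.range (n + 1), ((2 * n).choose (2 * k) : ℤ) * 5 ^ k * F (6 * (k : ℤ) + s)
      = 4 ^ n * (4 ^ n * F (4 * (n : ℤ) + s) + F (6 * (n : ℤ) + s)) := by
  have hF2 : ∀ j : ℤ, F (j + 2) = F (j + 1) + F j := by
    intro j
    have h := hF (j + 2)
    rw [show j + 2 - 1 = j + 1 from by ring, show j + 2 - 2 = j from by ring] at h
    exact h
  have hkey := key_s15 Y hYsq n
  have hcomp := comp F hF0 hF1 hF2
  have hshift := shiftF F hF0 hF1 hF2
  have h64ne : ((64 : ℤ) ^ n) ≠ 0 := by positivity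
  have p16 : (2 : ℤ) ^ (4 * n) = 16 ^ n := by rw [pow_mul]; norm_num
  have p64 : (2 : ℤ) ^ (6 * n) = 64 ^ n := by rw [pow_mul]; norm_num
  -- extraction via the additive homs
  have him : ∀ (c : ℤ) (z : Zsqrtd 5), ((c : Zsqrtd 5) * z).im = c * z.im := by
    intro c z
    rw [Zsqrtd.im_mul, Zsqrtd.re_intCast, Zsqrtd.im_intCast]; ring
  have hre : ∀ (c : ℤ) (z : Zsqrtd 5), ((c : Zsqrtd 5) * z).re = c * z.re := by
    intro c z
    rw [Zsqrtd.re_mul, Zsqrtd.re_intCast, Zsqrtd.im_intCast]; ring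
  have hkey_im : ∑ k ∈ range (n + 1),
      (2 * ((2 * n).choose (2 * k)) * 5 ^ k * 64 ^ (n - k) : ℤ) * (Y ^ (6 * k)).im
        = 64 ^ n * (Y ^ (4 * n)).im + 4 ^ n * (Y ^ (6 * n)).im := by
    have h := congrArg imH hkey
    rw [map_sum, map_add] at h
    have h' : ∑ k ∈ range (n + 1),
        (((2 * ((2 * n).choose (2 * k)) * 5 ^ k * 64 ^ (n - k) : ℤ) : Zsqrtd 5)
          * Y ^ (6 * k)).im
          = (((64 ^ n : ℤ) : Zsqrtd 5) * Y ^ (4 * n)).im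
            + (((4 ^ n : ℤ) : Zsqrtd 5) * Y ^ (6 * n)).im := h
    simpa only [him] using h'
  have hkey_p : ∑ k ∈ range (n + 1),
      (2 * ((2 * n).choose (2 * k)) * 5 ^ k * 64 ^ (n - k) : ℤ)
          * ((Y ^ (6 * k)).re + (Y ^ (6 * k)).im)
        = 64 ^ n * ((Y ^ (4 * n)).re + (Y ^ (4 * n)).im)
          + 4 ^ n * ((Y ^ (6 * n)).re + (Y ^ (6 * n)).im) := by
    have h := congrArg pH hkey
    rw [map_sum, map_add] at h
    have h' : ∑ k ∈ range (n + 1),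
        ((((2 * ((2 * n).choose (2 * k)) * 5 ^ k * 64 ^ (n - k) : ℤ) : Zsqrtd 5)
            * Y ^ (6 * k)).re
          + (((2 * ((2 * n).choose (2 * k)) * 5 ^ k * 64 ^ (n - k) : ℤ) : Zsqrtd 5)
            * Y ^ (6 * k)).im)
          = ((((64 ^ n : ℤ) : Zsqrtd 5) * Y ^ (4 * n)).re
              + (((64 ^ n : ℤ) : Zsqrtd 5) * Y ^ (4 * n)).im)
            + ((((4 ^ n : ℤ) : Zsqrtd 5) * Y ^ (6 * n)).re
              + (((4 ^ n : ℤ) : Zsqrtd 5) * Y ^ (6 * n)).im) := h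
    calc ∑ k ∈ range (n + 1),
        (2 * ((2 * n).choose (2 * k)) * 5 ^ k * 64 ^ (n - k) : ℤ)
            * ((Y ^ (6 * k)).re + (Y ^ (6 * k)).im)
        = ∑ k ∈ range (n + 1),
          ((((2 * ((2 * n).choose (2 * k)) * 5 ^ k * 64 ^ (n - k) : ℤ) : Zsqrtd 5)
              * Y ^ (6 * k)).re
            + (((2 * ((2 * n).choose (2 * k)) * 5 ^ k * 64 ^ (n - k) : ℤ) : Zsqrtd 5)
              * Y ^ (6 * k)).im) := by
          refine sum_congr rfl fun k _ => ?_
          rw [him, hre]; ring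
      _ = _ := by rw [h', hre, him, hre, him]; ring
  -- identity (B)
  have hB : 2 * ∑ k ∈ range (n + 1),
      ((2 * n).choose (2 * k) : ℤ) * 5 ^ k * F ((6 * k : ℕ) : ℤ)
        = 16 ^ n * F ((4 * n : ℕ) : ℤ) + 4 ^ n * F ((6 * n : ℕ) : ℤ) := by
    apply mul_left_cancel₀ h64ne
    have h2 : ∑ k ∈ range (n + 1),
        (2 * ((2 * n).choose (2 * k)) * 5 ^ k * 64 ^ (n - k) : ℤ) * (Y ^ (6 * k)).im
          = 64 ^ n * ∑ k ∈ range (n + 1),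
              ((2 * n).choose (2 * k) : ℤ) * 5 ^ k * F ((6 * k : ℕ) : ℤ) := by
      rw [Finset.mul_sum]
      apply sum_congr rfl
      intro k hk
      have hk' : k ≤ n := Nat.lt_succ_iff.mp (mem_range.mp hk)
      have hc := (hcomp (6 * k)).2
      have hp : (64 : ℤ) ^ (n - k) * 2 ^ (6 * k) = 64 ^ n := by
        have h1 : ((64 : ℤ)) ^ k = 2 ^ (6 * k) := by rw [pow_mul]; norm_num
        rw [← h1, ← pow_add, Nat.sub_add_cancel hk']
      linear_combination (((2 * n).choose (2 * k) : ℤ) * 5 ^ k * 64 ^ (n - k)) * hc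
        + (((2 * n).choose (2 * k) : ℤ) * 5 ^ k * F ((6 * k : ℕ) : ℤ)) * hp
    have hc4 := (hcomp (4 * n)).2
    have hc6 := (hcomp (6 * n)).2
    calc (64 : ℤ) ^ n * (2 * ∑ k ∈ range (n + 1),
            ((2 * n).choose (2 * k) : ℤ) * 5 ^ k * F ((6 * k : ℕ) : ℤ))
        = 2 * ∑ k ∈ range (n + 1),
            (2 * ((2 * n).choose (2 * k)) * 5 ^ k * 64 ^ (n - k) : ℤ) * (Y ^ (6 * k)).im := by
          rw [h2]; ring
      _ = 2 * (64 ^ n * (Y ^ (4 * n)).im + 4 ^ n * (Y ^ (6 * n)).im) := by rw [hkey_im]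
      _ = 64 ^ n * (16 ^ n * F ((4 * n : ℕ) : ℤ) + 4 ^ n * F ((6 * n : ℕ) : ℤ)) := by
          linear_combination (64 : ℤ) ^ n * hc4 + (4 : ℤ) ^ n * hc6
            + ((64 : ℤ) ^ n * F ((4 * n : ℕ) : ℤ)) * p16
            + ((4 : ℤ) ^ n * F ((6 * n : ℕ) : ℤ)) * p64
  -- identity (A)
  have hA : 2 * ∑ k ∈ range (n + 1),
      ((2 * n).choose (2 * k) : ℤ) * 5 ^ k * F (((6 * k : ℕ) : ℤ) + 1)
        = 16 ^ n * F (((4 * n : ℕ) : ℤ) + 1) + 4 ^ n * F (((6 * n : ℕ) : ℤ) + 1) := by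
    apply mul_left_cancel₀ h64ne
    have h2 : ∑ k ∈ range (n + 1),
        (2 * ((2 * n).choose (2 * k)) * 5 ^ k * 64 ^ (n - k) : ℤ)
            * ((Y ^ (6 * k)).re + (Y ^ (6 * k)).im)
          = 64 ^ n * (2 * ∑ k ∈ range (n + 1),
              ((2 * n).choose (2 * k) : ℤ) * 5 ^ k * F (((6 * k : ℕ) : ℤ) + 1)) := by
      rw [Finset.mul_sum, Finset.mul_sum]
      apply sum_congr rfl
      intro k hk
      have hk' : k ≤ n := Nat.lt_succ_iff.mp (mem_range.mp hk)
      have hc := (hcomp (6 * k)).1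
      have hp : (64 : ℤ) ^ (n - k) * 2 ^ (6 * k) = 64 ^ n := by
        have h1 : ((64 : ℤ)) ^ k = 2 ^ (6 * k) := by rw [pow_mul]; norm_num
        rw [← h1, ← pow_add, Nat.sub_add_cancel hk']
      linear_combination (2 * ((2 * n).choose (2 * k) : ℤ) * 5 ^ k * 64 ^ (n - k)) * hc
        + (2 * ((2 * n).choose (2 * k) : ℤ) * 5 ^ k * F (((6 * k : ℕ) : ℤ) + 1)) * hp
    have hc4 := (hcomp (4 * n)).1
    have hc6 := (hcomp (6 * n)).1
    rw [← h2, hkey_p]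
    linear_combination (64 : ℤ) ^ n * hc4 + (4 : ℤ) ^ n * hc6
      + ((64 : ℤ) ^ n * F (((4 * n : ℕ) : ℤ) + 1)) * p16
      + ((4 : ℤ) ^ n * F (((6 * n : ℕ) : ℤ) + 1)) * p64
  -- assemble
  have h16 : (4 : ℤ) ^ n * 4 ^ n = 16 ^ n := by rw [← mul_pow]; norm_num
  have hsplit : ∀ k ∈ range (n + 1),
      ((2 * n).choose (2 * k) : ℤ) * 5 ^ k * F (6 * (k : ℤ) + s)
        = (((2 * n).choose (2 * k) : ℤ) * 5 ^ k * F (((6 * k : ℕ) : ℤ) + 1)) * F s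
          + (((2 * n).choose (2 * k) : ℤ) * 5 ^ k * F ((6 * k : ℕ) : ℤ)) * F (s - 1) := by
    intro k _
    rw [show 6 * (k : ℤ) + s = s + ((6 * k : ℕ) : ℤ) from by push_cast; ring, hshift (6 * k) s]
    ring
  rw [sum_congr rfl hsplit, sum_add_distrib, ← sum_mul, ← sum_mul]
  rw [show 4 * (n : ℤ) + s = s + ((4 * n : ℕ) : ℤ) from by push_cast; ring, hshift (4 * n) s]
  rw [show 6 * (n : ℤ) + s = s + ((6 * n : ℕ) : ℤ) from by push_cast; ring, hshift (6 * n) s]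
  linear_combination (F s) * hA + (F (s - 1)) * hB
    - ((F (((4 * n : ℕ) : ℤ) + 1) * F s + F ((4 * n : ℕ) : ℤ) * F (s - 1))) * h16
end
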